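/- arXiv:1807.00891 — 2 statements merged into one kernel-verified Lean document; each statement's English description precedes it below -/
import Mathlib

section
/- Let P and Q be probability measures on a common measurable space with Q absolutely continuous with respect to P and with ∫ (dQ/dP)² dP finite. For any measurable event A (the region where the test selects Q), set α = P(A) and β = Q(Aᶜ), and suppose 0 < α < 1. Then (1−β)²/α + β²/(1−α) ≤ ∫ (dQ/dP)² dP. Furthermore this bound is tight: for any α, β ∈ (0,1) there exist probability measures P, Q and an event A for which equality holds (e.g. P = Bernoulli(α), Q = Bernoulli(1−β), A = {1}). -/
open MeasureTheory ProbabilityTheory Filter Topology ENNReal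

noncomputable section

/-- Contiguity of a sequence of measures: `Q ◁ P`. -/
def Contiguous {Ω : ℕ → Type} [∀ n, MeasurableSpace (Ω n)]
    (Q P : ∀ n, Measure (Ω n)) : Prop :=
  ∀ A : ∀ n, Set (Ω n), (∀ n, MeasurableSet (A n)) →
    Tendsto (fun n => P n (A n)) atTop (𝓝 0) →
    Tendsto (fun n => Q n (A n)) atTop (𝓝 0)

/-- A spike prior: a family of probability measures on ℝⁿ with ‖x‖ → 1 in probability. -/
structure SpikePrior where
  μ : ∀ n : ℕ, Measure (EuclideanSpace ℝ (Fin n))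
  isProb : ∀ n, IsProbabilityMeasure (μ n)
  norm_tendsto_one : ∀ ε : ℝ, 0 < ε →
    Tendsto (fun n => μ n {x | ε < |‖x‖ - 1|}) atTop (𝓝 0)

/-- The second moment `E_{x,x'} exp((n λ²/2) ⟨x,x'⟩²)` (valued in `[0,∞]`). -/
def wignerSecondMoment (μ : ∀ n : ℕ, Measure (EuclideanSpace ℝ (Fin n)))
    (lam : ℝ) (n : ℕ) : ℝ≥0∞ :=
  ∫⁻ p, ENNReal.ofReal (Real.exp ((n * lam ^ 2 / 2) * (inner ℝ p.1 p.2 : ℝ) ^ 2))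
    ∂((μ n).prod (μ n))

/-- Wigner noise matrix: symmetric, entries independent up to symmetry, off-diagonal `P`,
diagonal `Pd`. -/
def wignerNoise (P Pd : Measure ℝ) (n : ℕ) : Measure (Fin n → Fin n → ℝ) :=
  (Measure.pi fun p : Fin n × Fin n => if p.1 = p.2 then Pd else P).map
    (fun g i j => if i ≤ j then g (i, j) else g (j, i))

/-- The general spiked Wigner model `Wig(λ, P, Pd, μ)`: law of `λ x xᵀ + n^{-1/2} W`. -/
def spikedWigner (lam : ℝ) (P Pd : Measure ℝ) {n : ℕ}
    (μ : Measure (EuclideanSpace ℝ (Fin n))) : Measure (Fin n → Fin n → ℝ) :=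
  (μ.prod (wignerNoise P Pd n)).map
    (fun q i j => lam * (q.1 i * q.1 j) + (Real.sqrt n)⁻¹ * q.2 i j)

/-- The unspiked Wigner model `Wig(0, P, Pd)`: law of `n^{-1/2} W`. -/
def unspikedWigner (P Pd : Measure ℝ) (n : ℕ) : Measure (Fin n → Fin n → ℝ) :=
  (wignerNoise P Pd n).map (fun W i j => (Real.sqrt n)⁻¹ * W i j)

/-- Spiked Gaussian Wigner model `GWig(λ, μ)` (GOE noise). -/
def GWig (lam : ℝ) {n : ℕ} (μ : Measure (EuclideanSpace ℝ (Fin n))) :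
    Measure (Fin n → Fin n → ℝ) :=
  spikedWigner lam (gaussianReal 0 1) (gaussianReal 0 2) μ

/-- Unspiked Gaussian Wigner model `GWig(0)`. -/
def GWig0 (n : ℕ) : Measure (Fin n → Fin n → ℝ) :=
  unspikedWigner (gaussianReal 0 1) (gaussianReal 0 2) n

/-- A real random variable `Z` on `(Ω, μ)` is `s2`-subgaussian. -/
def IsSubgaussian {Ω : Type} [MeasurableSpace Ω] (μ : Measure Ω) (Z : Ω → ℝ) (s2 : ℝ) : Prop :=
  Integrable Z μ ∧ (∫ ω, Z ω ∂μ) = 0 ∧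
    ∀ v : ℝ, ∫⁻ ω, ENNReal.ofReal (Real.exp (v * Z ω)) ∂μ
      ≤ ENNReal.ofReal (Real.exp (s2 * v ^ 2 / 2))

/-- An ℝⁿ-valued random variable (given by its law `μ`) is `s2`-subgaussian. -/
def IsSubgaussianVec {n : ℕ} (μ : Measure (EuclideanSpace ℝ (Fin n))) (s2 : ℝ) : Prop :=
  Integrable id μ ∧ (∫ x, x ∂μ) = 0 ∧
    ∀ v : EuclideanSpace ℝ (Fin n),
      ∫⁻ x, ENNReal.ofReal (Real.exp ((inner ℝ v x : ℝ))) ∂μ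
        ≤ ENNReal.ofReal (Real.exp (s2 * ‖v‖ ^ 2 / 2))

/-- `λ*_X`: the supremum of λ ≥ 0 for which the Wigner second moment stays bounded. -/
def lamStar (μ : ∀ n : ℕ, Measure (EuclideanSpace ℝ (Fin n))) : ℝ :=
  sSup {lam : ℝ | 0 ≤ lam ∧
    ∃ B : ℝ≥0∞, B ≠ ⊤ ∧ ∀ n, wignerSecondMoment μ lam n ≤ B}

/-- Standard Gaussian on `EuclideanSpace ℝ (Fin n)`. -/
def stdGaussianE (n : ℕ) : Measure (EuclideanSpace ℝ (Fin n)) :=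
  (Measure.pi fun _ : Fin n => gaussianReal 0 1).map
    (fun y => (WithLp.equiv 2 (Fin n → ℝ)).symm y)

/-- The square root of a positive semidefinite matrix (Mathlib's former
`Matrix.PosSemidef.sqrt`, removed since). -/
def Matrix.PosSemidef.sqrt {n : Type*} [Fintype n] [DecidableEq n] {A : Matrix n n ℝ}
    (hA : A.PosSemidef) : Matrix n n ℝ :=
  (hA.1.eigenvectorUnitary : Matrix n n ℝ) * Matrix.diagonal ((↑) ∘ (√·) ∘ hA.1.eigenvalues)
    * (star hA.1.eigenvectorUnitary : Matrix n n ℝ)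

open scoped Classical in
/-- Centered multivariate Gaussian `N(0, S)` (zero measure when `S` is not psd). -/
def gaussianCov {n : ℕ} (S : Matrix (Fin n) (Fin n) ℝ) : Measure (EuclideanSpace ℝ (Fin n)) :=
  if h : S.PosSemidef then
    (stdGaussianE n).map
      (fun w => (WithLp.equiv 2 (Fin n → ℝ)).symm (h.sqrt.mulVec (fun i => w i)))
  else 0

/-- The spiked Wishart model: the joint law of `N` i.i.d. samples from `N(0, I + β x xᵀ)`
with `x ~ μ`. -/
def wishartSpiked (β : ℝ) {n : ℕ} (μ : Measure (EuclideanSpace ℝ (Fin n))) (N : ℕ) :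
    Measure (Fin N → EuclideanSpace ℝ (Fin n)) :=
  μ.bind (fun x => Measure.pi fun _ : Fin N =>
    gaussianCov (1 + β • Matrix.vecMulVec (fun i => x i) (fun i => x i)))

/-- The unspiked Wishart model: `N` i.i.d. samples from `N(0, I)`. -/
def wishartNull (n N : ℕ) : Measure (Fin N → EuclideanSpace ℝ (Fin n)) :=
  Measure.pi fun _ : Fin N => stdGaussianE n

/-- The i.i.d. spike prior `iid(π/√n)`. -/
def iidPrior (π : Measure ℝ) (n : ℕ) : Measure (EuclideanSpace ℝ (Fin n)) :=
  (Measure.pi fun _ : Fin n => π).map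
    (fun y => (WithLp.equiv 2 (Fin n → ℝ)).symm (fun i => y i / Real.sqrt n))

/-- `f` is a rate function for the prior `μ`. -/
def IsRateFunction (μ : ∀ n : ℕ, Measure (EuclideanSpace ℝ (Fin n))) (f : ℝ → ℝ) : Prop :=
  (∀ t ∈ Set.Ico (0:ℝ) 1, 0 ≤ f t) ∧
  ∃ b : ℕ → ℝ → ℝ,
    (∀ n : ℕ, ∀ t ∈ Set.Ico (0:ℝ) 1,
      b n t ≤ -(1 / (n:ℝ)) *
        Real.log ((((μ n).prod (μ n)) {p | t ≤ |(inner ℝ p.1 p.2 : ℝ)|}).toReal)) ∧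
    TendstoUniformlyOn b f atTop (Set.Ico 0 1)

/-- The rate function `f` admits a local Chernoff bound for the prior `μ`. -/
def HasLocalChernoff (μ : ∀ n : ℕ, Measure (EuclideanSpace ℝ (Fin n))) (f : ℝ → ℝ) : Prop :=
  ∃ T : ℝ, 0 < T ∧ ∃ C : ℝ, 0 < C ∧ ∀ n : ℕ, ∀ t ∈ Set.Icc (0:ℝ) T,
    ((μ n).prod (μ n)) {p | t ≤ |(inner ℝ p.1 p.2 : ℝ)|}
      ≤ ENNReal.ofReal (C * Real.exp (-(n:ℝ) * f t))

/-- The function `F(β,t)` appearing in the Wishart lower bound (Theorem 5.9). -/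
def wishartF (β t : ℝ) : ℝ :=
  (1 + β) * (t * ((Real.sqrt (((1 - t ^ 2) / (2 * t * (β + 1))) ^ 2 + 1)
      - (1 - t ^ 2) / (2 * t * (β + 1))) - t) / (1 - t ^ 2))
    + (1 / 2) * Real.log ((1 - (Real.sqrt (((1 - t ^ 2) / (2 * t * (β + 1))) ^ 2 + 1)
      - (1 - t ^ 2) / (2 * t * (β + 1))) ^ 2) / (1 - t ^ 2))



lemma sq_lintegral_le_lintegral_sq_mul {Ω : Type} [MeasurableSpace Ω] (μ : Measure Ω)
    (f : Ω → ℝ≥0∞) (hf : AEMeasurable f μ) :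
    (∫⁻ x, f x ∂μ) ^ 2 ≤ (∫⁻ x, f x ^ 2 ∂μ) * μ Set.univ := by
  have hpq : Real.HolderConjugate 2 2 := Real.HolderConjugate.two_two
  have h := ENNReal.lintegral_mul_le_Lp_mul_Lq μ hpq hf (aemeasurable_const (b := (1:ℝ≥0∞)))
  simp only [mul_one, Pi.mul_apply, Pi.one_apply] at h
  have h1 : (∫⁻ _x, (1:ℝ≥0∞) ^ (2:ℝ) ∂μ) = μ Set.univ := by simp
  rw [h1] at h
  calc (∫⁻ x, f x ∂μ) ^ 2
      ≤ ((∫⁻ x, f x ^ (2:ℝ) ∂μ) ^ (1/2:ℝ) * (μ Set.univ) ^ (1/2:ℝ)) ^ 2 :=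
        pow_le_pow_left' h 2
    _ = (∫⁻ x, f x ^ 2 ∂μ) * μ Set.univ := by
        rw [mul_pow, ← ENNReal.rpow_natCast (_ ^ (1/2:ℝ)), ← ENNReal.rpow_natCast (_ ^ (1/2:ℝ)),
          ← ENNReal.rpow_mul, ← ENNReal.rpow_mul]
        norm_num

lemma part1 (Ω : Type) [MeasurableSpace Ω] (P Q : Measure Ω)
    (hP : IsProbabilityMeasure P) (hQ : IsProbabilityMeasure Q) (hQP : Q ≪ P)
    (hfin : (∫⁻ ω, (Q.rnDeriv P ω) ^ 2 ∂P) ≠ ⊤)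
    (A : Set Ω) (hA : MeasurableSet A)
    (hα : 0 < (P A).toReal) (hα1 : (P A).toReal < 1) :
    (1 - (Q Aᶜ).toReal) ^ 2 / (P A).toReal
        + (Q Aᶜ).toReal ^ 2 / (1 - (P A).toReal)
      ≤ (∫⁻ ω, (Q.rnDeriv P ω) ^ 2 ∂P).toReal := by
  set f := Q.rnDeriv P with hf
  have hfm : Measurable f := Measure.measurable_rnDeriv Q P
  -- key per-set bound
  have key : ∀ s : Set Ω, MeasurableSet s → 0 < (P s).toReal →
      (Q s).toReal ^ 2 / (P s).toReal ≤ (∫⁻ ω in s, f ω ^ 2 ∂P).toReal := by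
    intro s hs hPs
    have hQs : Q s = ∫⁻ ω in s, f ω ∂P := (Measure.setLIntegral_rnDeriv hQP s).symm
    have hcs := sq_lintegral_le_lintegral_sq_mul (P.restrict s) f hfm.aemeasurable
    rw [Measure.restrict_apply_univ] at hcs
    have hIfin : (∫⁻ ω in s, f ω ^ 2 ∂P) ≠ ⊤ :=
      (lt_of_le_of_lt (setLIntegral_le_lintegral _ _) hfin.lt_top).ne
    have hPfin : P s ≠ ⊤ := measure_ne_top _ _
    have hr : (Q s).toReal ^ 2 ≤ (∫⁻ ω in s, f ω ^ 2 ∂P).toReal * (P s).toReal := by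
      rw [hQs, ← ENNReal.toReal_pow, ← ENNReal.toReal_mul]
      refine ENNReal.toReal_mono (by finiteness) hcs
    rw [div_le_iff₀ hPs]
    exact hr
  have hc : MeasurableSet Aᶜ := hA.compl
  have hPc : (P Aᶜ).toReal = 1 - (P A).toReal := by
    rw [measure_compl hA (measure_ne_top _ _)]
    simp [ENNReal.toReal_sub_of_le (prob_le_one) (by finiteness)]
  have hQA : (Q A).toReal = 1 - (Q Aᶜ).toReal := by
    rw [← compl_compl A, measure_compl hc (measure_ne_top _ _)]
    simp [ENNReal.toReal_sub_of_le (prob_le_one) (by finiteness), compl_compl]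
  have h1 := key A hA hα
  have h2 := key Aᶜ hc (by rw [hPc]; linarith)
  have hsplit : (∫⁻ ω in A, f ω ^ 2 ∂P) + (∫⁻ ω in Aᶜ, f ω ^ 2 ∂P)
      = ∫⁻ ω, f ω ^ 2 ∂P := lintegral_add_compl _ hA
  have hIA : (∫⁻ ω in A, f ω ^ 2 ∂P) ≠ ⊤ :=
    (lt_of_le_of_lt (setLIntegral_le_lintegral _ _) hfin.lt_top).ne
  have hIC : (∫⁻ ω in Aᶜ, f ω ^ 2 ∂P) ≠ ⊤ :=
    (lt_of_le_of_lt (setLIntegral_le_lintegral _ _) hfin.lt_top).ne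
  have htr : (∫⁻ ω in A, f ω ^ 2 ∂P).toReal + (∫⁻ ω in Aᶜ, f ω ^ 2 ∂P).toReal
      = (∫⁻ ω, f ω ^ 2 ∂P).toReal := by
    rw [← ENNReal.toReal_add hIA hIC, hsplit]
  rw [← hQA, hPc] at *
  linarith [h1, h2]

lemma part2 (a b : ℝ) (ha : a ∈ Set.Ioo (0:ℝ) 1) (hb : b ∈ Set.Ioo (0:ℝ) 1) :
    ∃ (P Q : Measure Bool), IsProbabilityMeasure P ∧ IsProbabilityMeasure Q ∧ Q ≪ P ∧
      ∃ A : Set Bool, MeasurableSet A ∧ (P A).toReal = a ∧ (Q Aᶜ).toReal = b ∧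
        (1 - b) ^ 2 / a + b ^ 2 / (1 - a)
          = (∫⁻ ω, (Q.rnDeriv P ω) ^ 2 ∂P).toReal := by
  obtain ⟨ha0, ha1⟩ := ha
  obtain ⟨hb0, hb1⟩ := hb
  have ha1' : (0:ℝ) < 1 - a := by linarith
  have hb1' : (0:ℝ) < 1 - b := by linarith
  set P : Measure Bool :=
    (ENNReal.ofReal a) • Measure.dirac true + (ENNReal.ofReal (1 - a)) • Measure.dirac false
    with hPdef
  set f : Bool → ℝ≥0∞ :=
    fun ω => if ω then ENNReal.ofReal ((1 - b) / a) else ENNReal.ofReal (b / (1 - a)) with hfdef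
  have hfm : Measurable f := measurable_of_countable f
  set Q : Measure Bool := P.withDensity f with hQdef
  -- lintegral against P
  have hlint : ∀ g : Bool → ℝ≥0∞,
      ∫⁻ ω, g ω ∂P = ENNReal.ofReal a * g true + ENNReal.ofReal (1 - a) * g false := by
    intro g
    rw [hPdef, lintegral_add_measure, lintegral_smul_measure, lintegral_smul_measure,
      lintegral_dirac, lintegral_dirac, smul_eq_mul, smul_eq_mul]
  have hPapp : ∀ s : Set Bool,
      P s = ENNReal.ofReal a * s.indicator 1 true + ENNReal.ofReal (1 - a) * s.indicator 1 false := by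
    intro s
    rw [hPdef]
    simp [Measure.dirac_apply, smul_eq_mul]
  have hPprob : IsProbabilityMeasure P := by
    constructor
    rw [hPapp]
    simp [← ENNReal.ofReal_add ha0.le ha1'.le]
  have hQapp : ∀ s : Set Bool, MeasurableSet s →
      Q s = ENNReal.ofReal a * s.indicator f true + ENNReal.ofReal (1 - a) * s.indicator f false := by
    intro s hs
    rw [hQdef, withDensity_apply f hs, ← lintegral_indicator hs, hlint]
  have hftrue : ENNReal.ofReal a * f true = ENNReal.ofReal (1 - b) := by
    rw [hfdef]
    simp [← ENNReal.ofReal_mul ha0.le, mul_div_cancel₀ _ ha0.ne']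
  have hffalse : ENNReal.ofReal (1 - a) * f false = ENNReal.ofReal b := by
    rw [hfdef]
    simp [← ENNReal.ofReal_mul ha1'.le, mul_div_cancel₀ _ ha1'.ne']
  have hQprob : IsProbabilityMeasure Q := by
    constructor
    rw [hQapp _ MeasurableSet.univ]
    simp only [Set.indicator_univ]
    rw [hftrue, hffalse, ← ENNReal.ofReal_add hb1'.le hb0.le]
    norm_num
  refine ⟨P, Q, hPprob, hQprob, withDensity_absolutelyContinuous P f, {true}, trivial, ?_, ?_, ?_⟩
  · rw [hPapp]
    simp [Set.indicator_apply, ENNReal.toReal_ofReal ha0.le]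
  · rw [hQapp _ (by trivial)]
    simp only [Set.indicator_apply, Set.mem_compl_iff, Set.mem_singleton_iff]
    simp [hffalse, ENNReal.toReal_ofReal hb0.le]
  · have hrn : Q.rnDeriv P =ᵐ[P] f := Measure.rnDeriv_withDensity P hfm
    have hint : ∫⁻ ω, (Q.rnDeriv P ω) ^ 2 ∂P = ∫⁻ ω, f ω ^ 2 ∂P :=
      lintegral_congr_ae (hrn.mono fun x hx => by simp [hx])
    have ht : f true = ENNReal.ofReal ((1 - b) / a) := by simp [hfdef]
    have hfl : f false = ENNReal.ofReal (b / (1 - a)) := by simp [hfdef]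
    rw [hint, hlint, ht, hfl]
    rw [← ENNReal.ofReal_pow (by positivity), ← ENNReal.ofReal_pow (by positivity),
      ← ENNReal.ofReal_mul ha0.le, ← ENNReal.ofReal_mul ha1'.le,
      ← ENNReal.ofReal_add (by positivity) (by positivity),
      ENNReal.toReal_ofReal (by positivity)]
    rw [div_pow, div_pow]
    field_simp

/-- **Proposition 2.5.** For any test with acceptance region `A` for the alternative `Q`,
with type I error `α = P(A)` and type II error `β = Q(Aᶜ)`,
`(1-β)²/α + β²/(1-α) ≤ ∫ (dQ/dP)² dP`; and the bound is tight: for any `α, β ∈ (0,1)`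
there exist probability measures `P`, `Q` (e.g. on `Bool`) and an event `A` achieving equality. -/
theorem hypothesis_testing_power_bound :
    (∀ (Ω : Type) [MeasurableSpace Ω] (P Q : Measure Ω),
      IsProbabilityMeasure P → IsProbabilityMeasure Q → Q ≪ P →
      (∫⁻ ω, (Q.rnDeriv P ω) ^ 2 ∂P) ≠ ⊤ →
      ∀ A : Set Ω, MeasurableSet A →
        0 < (P A).toReal → (P A).toReal < 1 →
        (1 - (Q Aᶜ).toReal) ^ 2 / (P A).toReal
            + (Q Aᶜ).toReal ^ 2 / (1 - (P A).toReal)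
          ≤ (∫⁻ ω, (Q.rnDeriv P ω) ^ 2 ∂P).toReal) ∧
    (∀ a b : ℝ, a ∈ Set.Ioo (0:ℝ) 1 → b ∈ Set.Ioo (0:ℝ) 1 →
      ∃ (P Q : Measure Bool), IsProbabilityMeasure P ∧ IsProbabilityMeasure Q ∧ Q ≪ P ∧
        ∃ A : Set Bool, MeasurableSet A ∧ (P A).toReal = a ∧ (Q Aᶜ).toReal = b ∧
          (1 - b) ^ 2 / a + b ^ 2 / (1 - a)
            = (∫⁻ ω, (Q.rnDeriv P ω) ^ 2 ∂P).toReal) := by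
  refine ⟨?_, part2⟩
  intro Ω _ P Q hP hQ hQP hfin A hA h1 h2
  exact part1 Ω P Q hP hQ hQP hfin A hA h1 h2

end
end

section
/- Let ρ ∈ (0,1]. If ρ ≥ 1/3, then for all t ∈ ℝ, exp(t²/2) ≥ 1 − ρ + ρ·cosh(t/√ρ); that is, the distribution √(1/ρ)·R(ρ) is 1-subgaussian. Conversely, if ρ < 1/3, then there exists t ∈ ℝ for which exp(t²/2) < 1 − ρ + ρ·cosh(t/√ρ), so the smallest subgaussian constant of √(1/ρ)·R(ρ) exceeds 1. -/
private lemma fact_aux (n : ℕ) : 3 ^ n * 2 ^ (n + 1) * (n + 1).factorial ≤ (2 * (n + 1)).factorial := by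
  induction n with
  | zero => decide
  | succ m ih =>
    have h2 : 2 * (m + 2) = (2 * (m + 1)) + 1 + 1 := by ring
    rw [h2, Nat.factorial_succ, Nat.factorial_succ]
    calc 3 ^ (m + 1) * 2 ^ (m + 2) * (m + 2).factorial
        = (6 * (m + 2)) * (3 ^ m * 2 ^ (m + 1) * (m + 1).factorial) := by
          rw [Nat.factorial_succ]; ring
      _ ≤ (6 * (m + 2)) * (2 * (m + 1)).factorial := Nat.mul_le_mul_left _ ih
      _ ≤ ((2 * (m + 1) + 1 + 1) * ((2 * (m + 1) + 1) * (2 * (m + 1)).factorial)) := by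
          rw [← Nat.mul_assoc]
          exact Nat.mul_le_mul_right _ (by nlinarith)

private lemma part1_aux (ρ : ℝ) (h3 : 1 / 3 ≤ ρ) (s : ℝ) :
    1 - ρ + ρ * Real.cosh s ≤ Real.exp (ρ * s ^ 2 / 2) := by
  have hρ0 : (0:ℝ) < ρ := lt_of_lt_of_le (by norm_num) h3
  have hC : HasSum (fun n : ℕ => (if n = 0 then 1 - ρ else 0) + ρ * (s ^ (2 * n) / (2 * n).factorial))
      ((1 - ρ) + ρ * Real.cosh s) := (hasSum_ite_eq 0 (1 - ρ)).add ((Real.hasSum_cosh s).mul_left ρ)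
  have hE : HasSum (fun n : ℕ => (ρ * s ^ 2 / 2) ^ n / n.factorial) (Real.exp (ρ * s ^ 2 / 2)) := by
    rw [Real.exp_eq_exp_ℝ]
    exact NormedSpace.expSeries_div_hasSum_exp _
  refine hasSum_le (fun n => ?_) hC hE
  cases n with
  | zero => simp
  | succ m =>
    have hif : (if m + 1 = 0 then 1 - ρ else 0) = (0:ℝ) := by simp
    rw [hif, zero_add]
    have hy : (0:ℝ) ≤ (s ^ 2) ^ (m + 1) := by positivity
    have hA : (0:ℝ) < ((2 * (m + 1)).factorial : ℝ) := by positivity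
    have hB : (0:ℝ) < (2:ℝ) ^ (m + 1) * ((m + 1).factorial : ℝ) := by positivity
    have hnat : ((3:ℝ) ^ m * (2 ^ (m + 1) * ((m + 1).factorial : ℝ))) ≤ ((2 * (m + 1)).factorial : ℝ) := by
      have := fact_aux m
      have h3m : ((3 ^ m * 2 ^ (m + 1) * (m + 1).factorial : ℕ) : ℝ) ≤ (((2 * (m + 1)).factorial : ℕ) : ℝ) := by
        exact_mod_cast this
      push_cast at h3m
      linarith [h3m]
    have hρm : ((1:ℝ) / 3) ^ m ≤ ρ ^ m := pow_le_pow_left₀ (by norm_num) h3 m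
    have key : (2:ℝ) ^ (m + 1) * ((m + 1).factorial : ℝ) ≤ ρ ^ m * ((2 * (m + 1)).factorial : ℝ) := by
      have h1 : (2:ℝ) ^ (m + 1) * ((m + 1).factorial : ℝ) ≤ ((1:ℝ)/3) ^ m * ((2 * (m + 1)).factorial : ℝ) := by
        rw [div_pow, one_pow, div_mul_eq_mul_div, le_div_iff₀ (by positivity)]
        nlinarith [hnat]
      have h2 : ((1:ℝ)/3) ^ m * ((2 * (m + 1)).factorial : ℝ) ≤ ρ ^ m * ((2 * (m + 1)).factorial : ℝ) :=
        mul_le_mul_of_nonneg_right hρm hA.le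
      linarith
    have hLHS : ρ * (s ^ (2 * (m + 1)) / ((2 * (m + 1)).factorial : ℝ))
        = ρ * (s ^ 2) ^ (m + 1) / ((2 * (m + 1)).factorial : ℝ) := by
      rw [pow_mul]; ring
    have hRHS : (ρ * s ^ 2 / 2) ^ (m + 1) / ((m + 1).factorial : ℝ)
        = ρ ^ (m + 1) * (s ^ 2) ^ (m + 1) / ((2:ℝ) ^ (m + 1) * ((m + 1).factorial : ℝ)) := by
      rw [div_pow, mul_pow]; ring
    rw [hLHS, hRHS, div_le_div_iff₀ hA hB]
    have hρpow : ρ ^ (m + 1) = ρ * ρ ^ m := by ring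
    rw [hρpow]
    nlinarith [mul_le_mul_of_nonneg_left key (mul_nonneg hρ0.le hy)]

/-- **Sparse Rademacher subgaussianity (Appendix E).** For `ρ ∈ (0,1]`: if `ρ ≥ 1/3` then
`exp(t²/2) ≥ 1 - ρ + ρ cosh(t/√ρ)` for all `t` (i.e. `√(1/ρ)·R(ρ)` is `1`-subgaussian,
its MGF being `1 - ρ + ρ cosh(t/√ρ)`); if `ρ < 1/3` there is a `t` where this fails, so
the smallest subgaussian constant exceeds `1`. -/
theorem sparse_rademacher_subgaussian (ρ : ℝ) (hρ0 : 0 < ρ) (hρ1 : ρ ≤ 1) :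
    (1 / 3 ≤ ρ →
      ∀ t : ℝ, 1 - ρ + ρ * Real.cosh (t / Real.sqrt ρ) ≤ Real.exp (t ^ 2 / 2)) ∧
    (ρ < 1 / 3 →
      ∃ t : ℝ, Real.exp (t ^ 2 / 2) < 1 - ρ + ρ * Real.cosh (t / Real.sqrt ρ)) := by
  have hsq : Real.sqrt ρ ^ 2 = ρ := Real.sq_sqrt hρ0.le
  have hsqpos : 0 < Real.sqrt ρ := Real.sqrt_pos.mpr hρ0
  constructor
  · intro h3 t
    have hs2 : ρ * (t / Real.sqrt ρ) ^ 2 / 2 = t ^ 2 / 2 := by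
      rw [div_pow, hsq]
      field_simp
    have := part1_aux ρ h3 (t / Real.sqrt ρ)
    rwa [hs2] at this
  · intro h3
    set δ : ℝ := 1 / (24 * ρ) - 1 / 8 with hδdef
    have hδpos : 0 < δ := by
      rw [hδdef]
      have : 24 * ρ < 8 := by linarith
      have h1 : (1:ℝ) / 8 < 1 / (24 * ρ) := by
        apply div_lt_div_of_pos_left (by norm_num) (by positivity) this
      linarith
    set t : ℝ := min 1 (Real.sqrt (2 * δ)) with htdef
    have ht0 : 0 < t := lt_min one_pos (Real.sqrt_pos.mpr (by linarith))
    have ht1 : t ≤ 1 := min_le_left _ _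
    have htδ : t ^ 2 ≤ 2 * δ := by
      have h := min_le_right 1 (Real.sqrt (2 * δ))
      calc t ^ 2 ≤ Real.sqrt (2 * δ) ^ 2 := by
            apply pow_le_pow_left₀ ht0.le h
        _ = 2 * δ := Real.sq_sqrt (by linarith)
    refine ⟨t, ?_⟩
    -- upper bound on exp
    have hu : |t ^ 2 / 2| ≤ 1 := by
      rw [abs_of_nonneg (by positivity)]
      nlinarith
    have hexp := Real.exp_bound hu (n := 3) (by norm_num)
    have hsum3 : ∑ m ∈ Finset.range 3, (t ^ 2 / 2) ^ m / m.factorial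
        = 1 + t ^ 2 / 2 + t ^ 4 / 8 := by
      simp [Finset.sum_range_succ, Nat.factorial]
      ring
    have hexp' : Real.exp (t ^ 2 / 2) ≤ 1 + t ^ 2 / 2 + t ^ 4 / 8 + (t ^ 2 / 2) ^ 3 * (2 / 9) := by
      have h1 := abs_le.mp hexp
      rw [hsum3] at h1
      have habs : |t ^ 2 / 2| ^ 3 = (t ^ 2 / 2) ^ 3 := by
        rw [abs_of_nonneg (by positivity)]
      rw [habs] at h1
      have h2 := h1.2
      norm_num [Nat.factorial] at h2
      linarith [h2]
    -- lower bound on cosh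
    set s : ℝ := t / Real.sqrt ρ with hsdef
    have hs2 : s ^ 2 = t ^ 2 / ρ := by rw [hsdef, div_pow, hsq]
    have hcosh : 1 + s ^ 2 / 2 + (s ^ 2) ^ 2 / 24 ≤ Real.cosh s := by
      have hterm : ∀ n : ℕ, 0 ≤ s ^ (2 * n) / ((2 * n).factorial : ℝ) := by
        intro n
        rw [pow_mul]
        positivity
      have h := sum_le_hasSum (Finset.range 3) (fun n _ => hterm n) (Real.hasSum_cosh s)
      have hsum : ∑ n ∈ Finset.range 3, s ^ (2 * n) / ((2 * n).factorial : ℝ)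
          = 1 + s ^ 2 / 2 + (s ^ 2) ^ 2 / 24 := by
        simp [Finset.sum_range_succ, Nat.factorial, pow_mul]
        try ring
      rwa [hsum] at h
    have hρcosh : 1 + t ^ 2 / 2 + t ^ 4 / (24 * ρ) ≤ 1 - ρ + ρ * Real.cosh s := by
      have h := mul_le_mul_of_nonneg_left hcosh hρ0.le
      have he : ρ * (1 + s ^ 2 / 2 + (s ^ 2) ^ 2 / 24) = ρ + t ^ 2 / 2 + t ^ 4 / (24 * ρ) := by
        rw [hs2]
        field_simp
        try ring
      linarith [he ▸ h]
    -- combine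
    clear_value s t δ
    have hfinal : 1 + t ^ 2 / 2 + t ^ 4 / 8 + (t ^ 2 / 2) ^ 3 * (2 / 9)
        < 1 + t ^ 2 / 2 + t ^ 4 / (24 * ρ) := by
      have h24 : t ^ 4 / (24 * ρ) = t ^ 4 / 8 + t ^ 4 * δ := by
        rw [hδdef]; field_simp; ring
      rw [h24]
      have ht4 : 0 < t ^ 4 := by positivity
      have hmul : t ^ 4 * t ^ 2 ≤ t ^ 4 * (2 * δ) := by
        exact mul_le_mul_of_nonneg_left htδ ht4.le
      have hpos : 0 < t ^ 4 * δ := mul_pos ht4 hδpos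
      have hcube : (t ^ 2 / 2) ^ 3 * (2 / 9) = t ^ 4 * t ^ 2 / 36 := by ring
      rw [hcube]
      have hmul2 : t ^ 4 * t ^ 2 ≤ 2 * (t ^ 4 * δ) := by nlinarith [hmul]
      linarith [hmul2, hpos]
    linarith
end
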